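/- For every positive integer k there exists a constant C(k), depending only on k, with the following property: for every α ∈ (0,1] and every function v ∈ C^k(ℝ) such that v does not change sign on ℝ (either v(x) ≥ 0 for all x or v(x) ≤ 0 for all x), v' does not change sign on ℝ, and the k-th derivative v^{(k)} is α-Hölder continuous on ℝ with constant H, one has |v'(x)|^{k+α} ≤ C(k) · |v(x)|^{k+α-1} · H for every x ∈ ℝ. -/

import Mathlib

open Finset Polynomial

open Finset Polynomial

private lemma glaeser_fd_coeffs (k : ℕ) : ∃ c : ℕ → ℝ, ∀ P : Polynomial ℝ, P.degree ≤ k →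
    (Polynomial.derivative P).eval 0 = ∑ j ∈ Finset.range (k+1), c j * P.eval (j : ℝ) := by
  classical
  have hinj : Set.InjOn (fun n : ℕ => (n : ℝ)) (Finset.range (k+1) : Finset ℕ) :=
    fun a _ b _ h => Nat.cast_injective h
  refine ⟨fun j => (Polynomial.derivative
      (Lagrange.basis (Finset.range (k+1)) (fun n : ℕ => (n:ℝ)) j)).eval 0, fun P hP => ?_⟩
  have hd : P.degree < ((Finset.range (k+1)).card : ℕ) := by
    rw [Finset.card_range]
    exact lt_of_le_of_lt hP (by exact_mod_cast Nat.lt_succ_self k)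
  conv_lhs => rw [Lagrange.eq_interpolate hinj hd]
  rw [Lagrange.interpolate_apply, map_sum, Polynomial.eval_finset_sum]
  refine Finset.sum_congr rfl fun j hj => ?_
  rw [Polynomial.derivative_C_mul, Polynomial.eval_mul, Polynomial.eval_C]
  ring

private lemma glaeser_iDW_eq {k m : ℕ} {v : ℝ → ℝ} (hv : ContDiff ℝ (k:ℕ∞) v)
    {s : Set ℝ} (hs : UniqueDiffOn ℝ s) (hm : m ≤ k) {x : ℝ} (hx : x ∈ s) :
    iteratedDerivWithin m v s x = iteratedDeriv m v x := by
  have h := (contDiff_iff_ftaylorSeries.mp hv).hasFTaylorSeriesUpToOn s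
  have h2 := h.eq_iteratedFDerivWithin_of_uniqueDiffOn (by exact_mod_cast hm) hs hx
  rw [iteratedDerivWithin_eq_iteratedFDerivWithin, ← h2, iteratedDeriv_eq_iteratedFDeriv]
  rfl

private lemma glaeser_taylor {k : ℕ} (hk : 0 < k) {v : ℝ → ℝ} (hv : ContDiff ℝ (k:ℕ∞) v)
    {α H : ℝ} (hα0 : 0 < α) (hH : 0 ≤ H)
    (hHol : ∀ x y : ℝ, |iteratedDeriv k v y - iteratedDeriv k v x| ≤ H * |y - x| ^ α)
    (x y : ℝ) (hxy : x ≤ y) :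
    |v y - ∑ i ∈ Finset.range (k+1), iteratedDeriv i v x * (y - x)^i / (i.factorial : ℝ)|
      ≤ H * (y - x) ^ ((k:ℝ) + α) := by
  have hE : (0:ℝ) < (k:ℝ) + α := by positivity
  rcases eq_or_lt_of_le hxy with rfl | hlt
  · have hsum : ∑ i ∈ Finset.range (k+1), iteratedDeriv i v x * (x - x)^i / (i.factorial : ℝ)
        = v x := by
      rw [Finset.sum_eq_single_of_mem 0 (Finset.mem_range.mpr (Nat.succ_pos k))]
      · simp
      · intro i _ hi
        simp [sub_self, zero_pow hi]
    rw [hsum, sub_self, abs_zero, sub_self, Real.zero_rpow (ne_of_gt hE), mul_zero]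
  · obtain ⟨n, rfl⟩ : ∃ n, k = n + 1 := ⟨k-1, (Nat.succ_pred_eq_of_pos hk).symm⟩
    have hu : UniqueDiffOn ℝ (Set.Icc x y) := uniqueDiffOn_Icc hlt
    have hf : ContDiffOn ℝ n v (Set.Icc x y) :=
      (hv.of_le (by exact_mod_cast Nat.le_succ n)).contDiffOn
    have hdiff : Differentiable ℝ (iteratedDeriv n v) :=
      hv.differentiable_iteratedDeriv n (by exact_mod_cast Nat.lt_succ_self n)
    have hf' : DifferentiableOn ℝ (iteratedDerivWithin n v (Set.Icc x y)) (Set.Ioo x y) :=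
      (hdiff.differentiableOn).congr fun z hz =>
        glaeser_iDW_eq hv hu (Nat.le_succ n) (Set.Ioo_subset_Icc_self hz)
    obtain ⟨x', hx', heq⟩ := taylor_mean_remainder_lagrange hlt.ne
      (by rwa [Set.uIcc_of_le hxy]) (by rwa [Set.uIcc_of_le hxy, Set.uIoo_of_le hxy])
    rw [Set.uIoo_of_le hxy] at hx'
    rw [Set.uIcc_of_le hxy] at heq
    have hT : taylorWithinEval v n (Set.Icc x y) x y
        = ∑ i ∈ Finset.range (n+1), iteratedDeriv i v x * (y - x)^i / (i.factorial : ℝ) := by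
      rw [taylor_within_apply]
      refine Finset.sum_congr rfl fun i hi => ?_
      rw [glaeser_iDW_eq hv hu (le_trans (Nat.lt_succ_iff.mp (Finset.mem_range.mp hi))
        (Nat.le_succ n)) (Set.left_mem_Icc.mpr hxy)]
      rw [smul_eq_mul]; ring
    have hW : iteratedDerivWithin (n+1) v (Set.Icc x y) x'
        = iteratedDeriv (n+1) v x' :=
      glaeser_iDW_eq hv hu le_rfl (Set.Ioo_subset_Icc_self hx')
    have hsplit : v y - ∑ i ∈ Finset.range (n+1+1),
          iteratedDeriv i v x * (y - x)^i / (i.factorial : ℝ)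
        = (iteratedDeriv (n+1) v x' - iteratedDeriv (n+1) v x) * (y - x)^(n+1)
            / ((n+1).factorial : ℝ) := by
      rw [Finset.sum_range_succ, ← hT, sub_add_eq_sub_sub, heq, hW]
      ring
    rw [hsplit]
    have hyx : (0:ℝ) < y - x := sub_pos.mpr hlt
    have h1 : |(iteratedDeriv (n+1) v x' - iteratedDeriv (n+1) v x) * (y - x)^(n+1)
        / ((n+1).factorial : ℝ)|
        ≤ (H * |x' - x| ^ α) * (y - x)^(n+1) / ((n+1).factorial : ℝ) := by
      rw [abs_div, abs_mul, abs_of_nonneg (pow_nonneg hyx.le (n+1)), Nat.abs_cast]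
      gcongr
      exact hHol x x'
    refine h1.trans ?_
    have h3 : |x' - x| ^ α ≤ (y - x) ^ α := by
      apply Real.rpow_le_rpow (abs_nonneg _) _ (le_of_lt hα0)
      rw [abs_of_nonneg (by linarith [hx'.1] : (0:ℝ) ≤ x' - x)]
      linarith [hx'.2]
    have h4 : (1:ℝ) ≤ ((n+1).factorial : ℝ) := by exact_mod_cast Nat.factorial_pos (n+1)
    have h5 : (y - x) ^ α * (y - x)^(n+1) = (y - x) ^ (((n+1:ℕ):ℝ) + α) := by
      rw [← Real.rpow_natCast (y-x) (n+1), ← Real.rpow_add hyx, add_comm]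
    calc H * |x' - x| ^ α * (y - x) ^ (n + 1) / ((n+1).factorial : ℝ)
        ≤ H * |x' - x| ^ α * (y - x) ^ (n + 1) :=
          div_le_self (mul_nonneg (mul_nonneg hH (Real.rpow_nonneg (abs_nonneg _) _))
            (pow_nonneg hyx.le _)) h4
      _ ≤ H * (y - x) ^ α * (y - x) ^ (n + 1) :=
          mul_le_mul_of_nonneg_right (mul_le_mul_of_nonneg_left h3 hH) (pow_nonneg hyx.le _)
      _ = H * (y - x) ^ (((n+1:ℕ):ℝ) + α) := by rw [mul_assoc, h5]

open Polynomial in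
private lemma glaeser_core (k : ℕ) (hk : 0 < k) :
    ∃ C : ℝ, 1 ≤ C ∧ ∀ α : ℝ, α ∈ Set.Ioc (0 : ℝ) 1 → ∀ v : ℝ → ℝ,
      ContDiff ℝ (k : ℕ∞) v →
      (∀ x : ℝ, 0 ≤ v x) → (∀ x : ℝ, deriv v x ≤ 0) →
      ∀ H : ℝ, 0 ≤ H →
      (∀ x y : ℝ, |iteratedDeriv k v y - iteratedDeriv k v x| ≤ H * |y - x| ^ α) →
      ∀ x : ℝ, |deriv v x| ^ ((k : ℝ) + α) ≤ C * |v x| ^ ((k : ℝ) + α - 1) * H := by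
  classical
  obtain ⟨c, hc⟩ := glaeser_fd_coeffs k
  set A : ℝ := ∑ j ∈ Finset.range (k+1), |c j| with hA
  set B : ℝ := ((k:ℝ)+1)^(k+1) with hB
  have hA0 : 0 ≤ A := Finset.sum_nonneg fun j _ => abs_nonneg _
  have hB0 : 0 ≤ B := by positivity
  set M : ℝ := A * (1 + B) + 1 with hM
  have hM1 : 1 ≤ M := by nlinarith
  refine ⟨M ^ (k+1), one_le_pow₀ hM1, ?_⟩
  intro α hα v hv hpos hder H hH hHol x
  obtain ⟨hα0, hα1⟩ := hα
  have hE0 : (1:ℝ) < (k:ℝ) + α := by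
    have : (1:ℝ) ≤ (k:ℝ) := by exact_mod_cast Nat.one_le_iff_ne_zero.mpr hk.ne'
    linarith
  set E : ℝ := (k:ℝ) + α with hEdef
  have hEk1 : E ≤ (k:ℝ) + 1 := by simp only [hEdef]; linarith
  have hanti : Antitone v := by
    have hdv : Differentiable ℝ v := hv.differentiable (by exact_mod_cast hk.ne')
    exact antitone_of_deriv_nonpos hdv hder
  -- key inequality
  have key : ∀ h : ℝ, 0 < h → |deriv v x| * h ≤ A * v x + A * B * (H * h ^ E) := by
    intro h hh
    set a : ℕ → ℝ := fun i => iteratedDeriv i v x * h^i / (i.factorial : ℝ) with ha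
    set Q : Polynomial ℝ := ∑ i ∈ Finset.range (k+1), Polynomial.C (a i) * X^i with hQ
    have hdeg : Q.degree ≤ k := by
      refine (Polynomial.degree_sum_le _ _).trans (Finset.sup_le fun i hi => ?_)
      refine (Polynomial.degree_mul_le _ _).trans ?_
      rw [Polynomial.degree_X_pow]
      refine le_trans (add_le_add Polynomial.degree_C_le le_rfl) ?_
      rw [zero_add]
      exact_mod_cast Nat.lt_succ_iff.mp (Finset.mem_range.mp hi)
    have hcoeff : Q.coeff 1 = a 1 := by
      rw [hQ, Polynomial.finset_sum_coeff]
      simp_rw [Polynomial.coeff_C_mul, Polynomial.coeff_X_pow]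
      rw [Finset.sum_eq_single 1 (fun i _ hi => by simp [Ne.symm hi])
        (fun hm => absurd (Finset.mem_range.mpr (by omega)) hm)]
      simp
    have hQd : (Polynomial.derivative Q).eval 0 = deriv v x * h := by
      rw [← Polynomial.coeff_zero_eq_eval_zero, Polynomial.coeff_derivative, hcoeff, ha]
      simp [iteratedDeriv_one]
    have hQev : ∀ j : ℕ, Q.eval ((j:ℝ)) = ∑ i ∈ Finset.range (k+1),
        iteratedDeriv i v x * ((x + j*h) - x)^i / (i.factorial : ℝ) := by
      intro j
      rw [hQ, Polynomial.eval_finset_sum]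
      refine Finset.sum_congr rfl fun i _ => ?_
      rw [Polynomial.eval_mul, Polynomial.eval_C, Polynomial.eval_pow, Polynomial.eval_X, ha]
      have : (x + j*h) - x = j * h := by ring
      rw [this, mul_pow]
      ring
    have hkey := hc Q hdeg
    rw [hQd] at hkey
    -- |deriv v x * h| ≤ ∑ |c j| * |Q.eval j| ≤ ∑ |c j| * (v x + B * (H * h^E))
    have hbound : ∀ j ∈ Finset.range (k+1), |Q.eval ((j:ℝ))| ≤ v x + B * (H * h ^ E) := by
      intro j hj
      have hjk : j ≤ k := Nat.lt_succ_iff.mp (Finset.mem_range.mp hj)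
      have hyx : x ≤ x + j*h := by
        have : (0:ℝ) ≤ (j:ℝ) * h := mul_nonneg (Nat.cast_nonneg j) hh.le
        linarith
      have htay := glaeser_taylor hk hv hα0 hH hHol x (x + j*h) hyx
      have hvj0 : 0 ≤ v (x + j*h) := hpos _
      have hvj1 : v (x + j*h) ≤ v x := hanti (by linarith [mul_nonneg (Nat.cast_nonneg j : (0:ℝ) ≤ j) hh.le])
      have habs : |Q.eval ((j:ℝ))| ≤ |v (x + j*h)| +
          |Q.eval ((j:ℝ)) - v (x + j*h)| := by
        calc |Q.eval ((j:ℝ))| = |v (x + j*h) + (Q.eval ((j:ℝ)) - v (x + j*h))| := by ring_nf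
          _ ≤ _ := abs_add_le _ _
      refine habs.trans ?_
      have h1 : |v (x + j*h)| ≤ v x := by rw [abs_of_nonneg hvj0]; exact hvj1
      have h2 : |Q.eval ((j:ℝ)) - v (x + j*h)| ≤ H * ((x + j*h) - x) ^ E := by
        rw [hQev j, ← abs_sub_comm]
        exact htay
      have h3 : ((x + j*h) - x) = (j:ℝ) * h := by ring
      have h4 : H * ((j:ℝ) * h) ^ E ≤ B * (H * h ^ E) := by
        rw [Real.mul_rpow (Nat.cast_nonneg j) hh.le]
        have hj : ((j:ℝ)) ^ E ≤ B := by
          rcases Nat.eq_zero_or_pos j with rfl | hj1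
          · rw [Nat.cast_zero, Real.zero_rpow (by linarith : E ≠ 0)]
            positivity
          · have hjr : (1:ℝ) ≤ (j:ℝ) := by exact_mod_cast hj1
            calc ((j:ℝ)) ^ E ≤ ((k:ℝ)+1) ^ E := by
                  apply Real.rpow_le_rpow (by linarith) _ (by linarith)
                  have : (j:ℝ) ≤ (k:ℝ) := by exact_mod_cast hjk
                  linarith
              _ ≤ ((k:ℝ)+1) ^ ((k:ℝ)+1) := by
                  apply Real.rpow_le_rpow_of_exponent_le (by linarith [Nat.cast_nonneg (α := ℝ) k]) hEk1
              _ = B := by rw [hB, ← Real.rpow_natCast ((k:ℝ)+1) (k+1)]; push_cast; ring_nf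
          
        calc H * ((j:ℝ) ^ E * h ^ E) ≤ H * (B * h ^ E) := by
              apply mul_le_mul_of_nonneg_left _ hH
              exact mul_le_mul_of_nonneg_right hj (Real.rpow_nonneg hh.le E)
          _ = B * (H * h ^ E) := by ring
      calc |v (x + j*h)| + |Q.eval ((j:ℝ)) - v (x + j*h)|
          ≤ v x + H * ((x + j*h) - x) ^ E := add_le_add h1 h2
        _ = v x + H * ((j:ℝ) * h) ^ E := by rw [h3]
        _ ≤ v x + B * (H * h ^ E) := by linarith
    calc |deriv v x| * h = |deriv v x * h| := by
          rw [abs_mul, abs_of_pos hh]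
      _ = |∑ j ∈ Finset.range (k+1), c j * Q.eval ((j:ℝ))| := by rw [hkey]
      _ ≤ ∑ j ∈ Finset.range (k+1), |c j * Q.eval ((j:ℝ))| := Finset.abs_sum_le_sum_abs _ _
      _ ≤ ∑ j ∈ Finset.range (k+1), |c j| * (v x + B * (H * h ^ E)) := by
          refine Finset.sum_le_sum fun j hj => ?_
          rw [abs_mul]
          exact mul_le_mul_of_nonneg_left (hbound j hj) (abs_nonneg _)
      _ = A * (v x + B * (H * h ^ E)) := by rw [← Finset.sum_mul]
      _ = A * v x + A * B * (H * h ^ E) := by ring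
  -- now optimize
  set D : ℝ := |deriv v x| with hD
  set V : ℝ := v x with hV
  have hV0 : 0 ≤ V := hpos x
  have hD0 : 0 ≤ D := abs_nonneg _
  have hE0' : (0:ℝ) < E := by linarith
  have habsV : |v x| = V := abs_of_nonneg hV0
  rw [habsV]
  rcases eq_or_lt_of_le hV0 with hVz | hVpos
  · -- V = 0 case : show D = 0
    have hDz : D = 0 := by
      refine le_antisymm ?_ hD0
      have : ∀ ε : ℝ, 0 < ε → D ≤ 0 + ε := by
        intro ε hε
        rw [zero_add]
        set t : ℝ := A * B * H with ht
        have ht0 : 0 ≤ t := by positivity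
        rcases eq_or_lt_of_le ht0 with htz | htpos
        · have hkey := key 1 one_pos
          rw [Real.one_rpow, ← hVz] at hkey
          have h0 : A * B * H = 0 := by rw [← ht, ← htz]
          have h1 : A * B * (H * 1) = A * B * H := by ring
          linarith
        · set h : ℝ := (ε/t) ^ (1/(E-1)) with hh'
          have hh : 0 < h := Real.rpow_pos_of_pos (div_pos hε htpos) _
          have hhE : h ^ (E-1) = ε / t := by
            rw [hh', ← Real.rpow_mul (div_pos hε htpos).le, one_div,
              inv_mul_cancel₀ (by linarith : E - 1 ≠ 0), Real.rpow_one]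
          have hkey := key h hh
          rw [← hVz] at hkey
          have hsplit : h ^ E = h ^ (E-1) * h := by
            nth_rewrite 1 [show E = E - 1 + 1 by ring]
            rw [Real.rpow_add_one (ne_of_gt hh)]
          have : D * h ≤ t * (h ^ (E-1) * h) := by
            calc D * h ≤ A * 0 + A * B * (H * h ^ E) := hkey
              _ = t * h ^ E := by ring
              _ = t * (h ^ (E-1) * h) := by rw [hsplit]
          have h2 : D ≤ t * h ^ (E-1) := by
            have h3 : D * h ≤ t * h ^ (E-1) * h := by
              calc D * h ≤ t * (h ^ (E-1) * h) := this
                _ = t * h ^ (E-1) * h := by ring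
            exact le_of_mul_le_mul_right h3 hh
          calc D ≤ t * h ^ (E-1) := h2
            _ = t * (ε / t) := by rw [hhE]
            _ = ε := by field_simp
      linarith [le_of_forall_pos_le_add this]
    rw [hDz, Real.zero_rpow (ne_of_gt hE0')]
    have : (0:ℝ) ≤ M ^ (k+1) * V ^ (E - 1) * H :=
      mul_nonneg (mul_nonneg (by positivity) (Real.rpow_nonneg hV0 _)) hH
    linarith
  rcases eq_or_lt_of_le hH with hHz | hHpos
  · -- H = 0 : D = 0
    have hDz : D = 0 := by
      refine le_antisymm ?_ hD0
      have : ∀ ε : ℝ, 0 < ε → D ≤ 0 + ε := by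
        intro ε hε
        rw [zero_add]
        set h : ℝ := (A * V + 1)/ε with hh'
        have hh : 0 < h := by positivity
        have hkey := key h hh
        rw [← hHz] at hkey
        have h2 : D * h ≤ A * V := by
          calc D * h ≤ A * V + A * B * (0 * h ^ E) := hkey
            _ = A * V := by ring
        have h3 : D ≤ A * V / h := by
          rw [le_div_iff₀ hh]; exact h2
        calc D ≤ A * V / h := h3
          _ = A * V * ε / (A * V + 1) := by rw [hh']; field_simp
          _ ≤ ε := by
            rw [div_le_iff₀ (by positivity)]
            nlinarith [mul_nonneg hA0 hV0]
      linarith [le_of_forall_pos_le_add this]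
    rw [hDz, Real.zero_rpow (ne_of_gt hE0')]
    have : (0:ℝ) ≤ M ^ (k+1) * V ^ (E - 1) * H :=
      mul_nonneg (mul_nonneg (by positivity) (Real.rpow_nonneg hV0 _)) hH
    linarith
  · -- main case V > 0, H > 0
    set h : ℝ := (V/H) ^ (1/E) with hh'
    have hVH : 0 < V / H := div_pos hVpos hHpos
    have hh : 0 < h := Real.rpow_pos_of_pos hVH _
    have hhE : h ^ E = V / H := by
      rw [hh', ← Real.rpow_mul hVH.le, one_div, inv_mul_cancel₀ (ne_of_gt hE0'),
        Real.rpow_one]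
    have hkey := key h hh
    have hHVH : H * (V / H) = V := by field_simp
    have hDle : D ≤ M * (V / h) := by
      have hcalc : D * h ≤ M * (V / h) * h := by
        calc D * h ≤ A * V + A * B * (H * h ^ E) := hkey
          _ = A * V + A * B * V := by rw [hhE, hHVH]
          _ = (A * (1 + B)) * V := by ring
          _ ≤ M * V := mul_le_mul_of_nonneg_right (by rw [hM]; linarith) hV0
          _ = M * (V / h) * h := by field_simp
      exact le_of_mul_le_mul_right hcalc hh
    have hMV0 : 0 ≤ M * (V / h) := mul_nonneg (by linarith) (div_nonneg hV0 hh.le)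
    have step1 : D ^ E ≤ (M * (V / h)) ^ E := Real.rpow_le_rpow hD0 hDle hE0'.le
    have step2 : (M * (V / h)) ^ E = M ^ E * (V ^ (E-1) * H) := by
      rw [Real.mul_rpow (by linarith : (0:ℝ) ≤ M) (div_nonneg hV0 hh.le)]
      congr 1
      rw [Real.div_rpow hV0 hh.le, hhE]
      rw [div_div_eq_mul_div, Real.rpow_sub hVpos, Real.rpow_one]
      ring
    have step3 : M ^ E ≤ M ^ (k+1) := by
      have := Real.rpow_le_rpow_of_exponent_le hM1 hEk1
      calc M ^ E ≤ M ^ ((k:ℝ)+1) := this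
        _ = M ^ ((k+1 : ℕ):ℝ) := by push_cast; ring_nf
        _ = M ^ (k+1) := Real.rpow_natCast M (k+1)
    calc D ^ E ≤ M ^ E * (V ^ (E-1) * H) := by rw [← step2]; exact step1
      _ ≤ M ^ (k+1) * (V ^ (E-1) * H) := by
          apply mul_le_mul_of_nonneg_right step3
          exact mul_nonneg (Real.rpow_nonneg hV0 _) hH
      _ = M ^ (k+1) * V ^ (E-1) * H := by ring

private lemma glaeser_nonneg (k : ℕ) (hk : 0 < k) :
    ∃ C : ℝ, 1 ≤ C ∧ ∀ α : ℝ, α ∈ Set.Ioc (0 : ℝ) 1 → ∀ v : ℝ → ℝ,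
      ContDiff ℝ (k : ℕ∞) v →
      (∀ x : ℝ, 0 ≤ v x) →
      ((∀ x : ℝ, 0 ≤ deriv v x) ∨ (∀ x : ℝ, deriv v x ≤ 0)) →
      ∀ H : ℝ, 0 ≤ H →
      (∀ x y : ℝ, |iteratedDeriv k v y - iteratedDeriv k v x| ≤ H * |y - x| ^ α) →
      ∀ x : ℝ, |deriv v x| ^ ((k : ℝ) + α) ≤ C * |v x| ^ ((k : ℝ) + α - 1) * H := by
  obtain ⟨C, hC1, hC⟩ := glaeser_core k hk
  refine ⟨C, hC1, ?_⟩
  intro α hα v hv hpos hder H hH hHol x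
  rcases hder with hder | hder
  · -- deriv v ≥ 0 : apply core to w t = v (-t) at -x
    set w : ℝ → ℝ := fun t => v (-t) with hw
    have hwv : ContDiff ℝ (k : ℕ∞) w := hv.comp contDiff_neg
    have hwpos : ∀ t, 0 ≤ w t := fun t => hpos (-t)
    have hwder : ∀ t, deriv w t ≤ 0 := by
      intro t
      rw [hw, deriv_comp_neg]
      simp [hder (-t)]
    have hwHol : ∀ x y : ℝ, |iteratedDeriv k w y - iteratedDeriv k w x| ≤ H * |y - x| ^ α := by
      intro a b
      have ha := iteratedDeriv_comp_neg k v a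
      have hb := iteratedDeriv_comp_neg k v b
      rw [hw]
      rw [ha, hb, smul_eq_mul, smul_eq_mul, ← mul_sub, abs_mul, abs_pow, abs_neg, abs_one,
        one_pow, one_mul]
      calc |iteratedDeriv k v (-b) - iteratedDeriv k v (-a)| ≤ H * |(-b) - (-a)| ^ α :=
            hHol (-a) (-b)
        _ = H * |b - a| ^ α := by rw [neg_sub_neg, abs_sub_comm]
    have := hC α hα w hwv hwpos hwder H hH hwHol (-x)
    have h1 : deriv w (-x) = -deriv v x := by rw [hw, deriv_comp_neg, neg_neg]
    have h2 : w (-x) = v x := by rw [hw]; simp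
    rwa [h1, h2, abs_neg] at this
  · exact hC α hα v hv hpos hder H hH hHol x

/-- **Higher order Glaeser inequality on ℝ.**
For every positive integer `k` there exists a constant `C(k)`, depending only on `k`,
such that for every `α ∈ (0,1]` and every `v ∈ C^k(ℝ)` whose values and whose first
derivative do not change sign on ℝ, and whose `k`-th derivative is `α`-Hölder continuous
with constant `H`, one has `|v'(x)|^(k+α) ≤ C(k) · |v(x)|^(k+α-1) · H` for all `x`. -/
theorem higher_order_glaeser_inequality (k : ℕ) (hk : 0 < k) :
    ∃ C : ℝ, ∀ α : ℝ, α ∈ Set.Ioc (0 : ℝ) 1 → ∀ v : ℝ → ℝ,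
      ContDiff ℝ (k : ℕ∞) v →
      ((∀ x : ℝ, 0 ≤ v x) ∨ (∀ x : ℝ, v x ≤ 0)) →
      ((∀ x : ℝ, 0 ≤ deriv v x) ∨ (∀ x : ℝ, deriv v x ≤ 0)) →
      ∀ H : ℝ, 0 ≤ H →
      (∀ x y : ℝ, |iteratedDeriv k v y - iteratedDeriv k v x| ≤ H * |y - x| ^ α) →
      ∀ x : ℝ, |deriv v x| ^ ((k : ℝ) + α) ≤ C * |v x| ^ ((k : ℝ) + α - 1) * H := by
  obtain ⟨C, _, hC⟩ := glaeser_nonneg k hk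
  refine ⟨C, ?_⟩
  intro α hα v hv hsgn hder H hH hHol x
  rcases hsgn with hpos | hneg
  · exact hC α hα v hv hpos hder H hH hHol x
  · set w : ℝ → ℝ := fun t => -(v t) with hw
    have hwv : ContDiff ℝ (k : ℕ∞) w := hv.neg
    have hwpos : ∀ t, 0 ≤ w t := fun t => neg_nonneg.mpr (hneg t)
    have hwder : (∀ t, 0 ≤ deriv w t) ∨ (∀ t, deriv w t ≤ 0) := by
      rcases hder with hder | hder
      · exact Or.inr fun t => by rw [hw, deriv.fun_neg]; simp [hder t]
      · exact Or.inl fun t => by rw [hw, deriv.fun_neg]; simp [hder t]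
    have hwHol : ∀ x y : ℝ, |iteratedDeriv k w y - iteratedDeriv k w x| ≤ H * |y - x| ^ α := by
      intro a b
      rw [hw, iteratedDeriv_fun_neg, iteratedDeriv_fun_neg]
      calc |-iteratedDeriv k v b - -iteratedDeriv k v a|
          = |iteratedDeriv k v b - iteratedDeriv k v a| := by rw [← abs_neg]; ring_nf
        _ ≤ H * |b - a| ^ α := hHol a b
    have := hC α hα w hwv hwpos hwder H hH hwHol x
    have h1 : deriv w x = -deriv v x := by rw [hw, deriv.fun_neg]
    have h2 : w x = -(v x) := rfl
    rwa [h1, h2, abs_neg, abs_neg] at this
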